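/- (Star-mesh transformations preserve end-to-end arrival functions.) Let A be a time-dependent network on a finite vertex set V, let s, d, c ∈ V with c ≠ s and c ≠ d, and define A' on the vertex set V \ {c} by A' u v = min(A u v, A c v ∘ A u c), the pointwise minimum. Then A' is again a time-dependent network (each A' u v is monotone and satisfies t ≤ A' u v t for all t), and the end-to-end arrival functions agree: A'_{(s,d)}(t) = A_{(s,d)}(t) for every t. (The pointwise minimum in the definition of A' simultaneously performs the parallel reductions.) -/

import Mathlib

open scoped ENNReal

/-- Arrival function of a walk: starting at `u` and then visiting the vertices of `l` in
order, departing at time `t`. -/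
def walkArr {V : Type*} (A : V → V → ℝ≥0∞ → ℝ≥0∞) : V → List V → ℝ≥0∞ → ℝ≥0∞
  | _, [], t => t
  | u, v :: l, t => walkArr A v l (A u v t)

/-- `l` (together with start vertex `s`) encodes a walk from `s` to `d`: the walk is the
nonempty vertex sequence `s :: l`, whose last vertex must be `d`. -/
def IsWalkTo {V : Type*} (s d : V) (l : List V) : Prop :=
  (s :: l).getLast (List.cons_ne_nil _ _) = d

/-- The end-to-end arrival function: infimum over all walks from `s` to `d`. -/
noncomputable def endToEnd {V : Type*} (A : V → V → ℝ≥0∞ → ℝ≥0∞) (s d : V) (t : ℝ≥0∞) :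
    ℝ≥0∞ :=
  ⨅ l : {l : List V // IsWalkTo s d l}, walkArr A s l.1 t

/-- The FIFO conditions on a time-dependent network: each edge arrival function is
monotone and arrival is not before departure. -/
def FIFO {V : Type*} (A : V → V → ℝ≥0∞ → ℝ≥0∞) : Prop :=
  ∀ u v : V, Monotone (A u v) ∧ ∀ t, t ≤ A u v t

section Aux

variable {V : Type*}

open scoped ENNReal

lemma walkArr_nil (A : V → V → ℝ≥0∞ → ℝ≥0∞) (u : V) (t : ℝ≥0∞) :
    walkArr A u [] t = t := rfl

lemma walkArr_cons (A : V → V → ℝ≥0∞ → ℝ≥0∞) (u v : V) (l : List V) (t : ℝ≥0∞) :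
    walkArr A u (v :: l) t = walkArr A v l (A u v t) := rfl

lemma walkArr_mono {A : V → V → ℝ≥0∞ → ℝ≥0∞} (hA : FIFO A) :
    ∀ (l : List V) (u : V), Monotone (walkArr A u l) := by
  intro l
  induction l with
  | nil => intro u a b hab; simpa [walkArr_nil] using hab
  | cons v l ih =>
    intro u a b hab
    exact ih v ((hA u v).1 hab)

lemma isWalkTo_cons {s d v : V} {l : List V} :
    IsWalkTo s d (v :: l) ↔ IsWalkTo v d l := by
  unfold IsWalkTo
  rw [List.getLast_cons (List.cons_ne_nil v l)]

lemma isWalkTo_nil {s d : V} : IsWalkTo s d ([] : List V) ↔ s = d := by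
  simp [IsWalkTo]

lemma endToEnd_le_walk {A : V → V → ℝ≥0∞ → ℝ≥0∞} {s d : V} (l : List V)
    (hl : IsWalkTo s d l) (t : ℝ≥0∞) : endToEnd A s d t ≤ walkArr A s l t :=
  iInf_le (fun l : {l : List V // IsWalkTo s d l} => walkArr A s l.1 t) ⟨l, hl⟩

lemma endToEnd_step {A : V → V → ℝ≥0∞ → ℝ≥0∞} (u v d : V) (t : ℝ≥0∞) :
    endToEnd A u d t ≤ endToEnd A v d (A u v t) := by
  refine le_iInf fun l => ?_
  exact endToEnd_le_walk (v :: l.1) (isWalkTo_cons.mpr l.2) t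

end Aux

/-- Star-mesh transformations (with simultaneous parallel reductions) preserve end-to-end
arrival functions: eliminating a non-terminal vertex `c` by setting
`A' u v = min (A u v, A c v ∘ A u c)` yields a time-dependent network on `V \ {c}` with
the same `s`-to-`d` arrival function. -/
theorem starMesh_preserves_endToEnd {V : Type*} [Fintype V] [DecidableEq V]
    (A : V → V → ℝ≥0∞ → ℝ≥0∞) (hA : FIFO A) (s d c : V) (hcs : c ≠ s) (hcd : c ≠ d)
    (A' : {x : V // x ≠ c} → {x : V // x ≠ c} → ℝ≥0∞ → ℝ≥0∞)
    (hA' : ∀ u v t, A' u v t = min (A u.1 v.1 t) (A c v.1 (A u.1 c t))) :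
    FIFO A' ∧ ∀ t, endToEnd A' ⟨s, hcs.symm⟩ ⟨d, hcd.symm⟩ t = endToEnd A s d t := by
  have hFIFO' : FIFO A' := by
    intro u v
    refine ⟨fun a b hab => ?_, fun t => ?_⟩
    · rw [hA', hA']
      exact min_le_min ((hA _ _).1 hab) ((hA _ _).1 ((hA _ _).1 hab))
    · rw [hA']
      exact le_min ((hA _ _).2 t) (le_trans ((hA _ _).2 t) ((hA _ _).2 _))
  refine ⟨hFIFO', fun t => ?_⟩
  set con : List V → List {x : V // x ≠ c} :=
    fun l => l.foldr (fun v acc => if h : v = c then acc else ⟨v, h⟩ :: acc) [] with hcon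
  have con_cons : ∀ (v : V) (l : List V),
      con (v :: l) = if h : v = c then con l else ⟨v, h⟩ :: con l := fun v l => rfl
  have key : ∀ l : List V,
      (∀ (u : V) (hu : u ≠ c) (t : ℝ≥0∞), walkArr A' ⟨u, hu⟩ (con l) t ≤ walkArr A u l t) ∧
      (∀ (u : V) (hu : u ≠ c) (t τ : ℝ≥0∞), A u c t ≤ τ →
        walkArr A' ⟨u, hu⟩ (con l) t ≤ walkArr A c l τ) := by
    intro l
    induction l with
    | nil => exact ⟨fun u hu t => le_rfl, fun u hu t τ h => le_trans ((hA u c).2 t) h⟩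
    | cons v l ih =>
      constructor
      · intro u hu t
        by_cases hv : v = c
        · rw [con_cons]; simp only [dif_pos hv]
          rw [walkArr_cons, hv]
          exact ih.2 u hu t (A u c t) le_rfl
        · rw [con_cons]; simp only [dif_neg hv]
          rw [walkArr_cons, walkArr_cons]
          calc walkArr A' ⟨v, hv⟩ (con l) (A' ⟨u, hu⟩ ⟨v, hv⟩ t)
              ≤ walkArr A' ⟨v, hv⟩ (con l) (A u v t) :=
                walkArr_mono hFIFO' _ _ (by rw [hA']; exact min_le_left _ _)
            _ ≤ walkArr A v l (A u v t) := ih.1 v hv _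
      · intro u hu t τ hτ
        by_cases hv : v = c
        · rw [con_cons]; simp only [dif_pos hv]
          rw [walkArr_cons, hv]
          exact ih.2 u hu t (A c c τ) (le_trans hτ ((hA c c).2 τ))
        · rw [con_cons]; simp only [dif_neg hv]
          rw [walkArr_cons, walkArr_cons]
          calc walkArr A' ⟨v, hv⟩ (con l) (A' ⟨u, hu⟩ ⟨v, hv⟩ t)
              ≤ walkArr A' ⟨v, hv⟩ (con l) (A c v τ) :=
                walkArr_mono hFIFO' _ _ (by
                  rw [hA']
                  exact le_trans (min_le_right _ _) ((hA c v).1 hτ))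
            _ ≤ walkArr A v l (A c v τ) := ih.1 v hv _
  have con_walk : ∀ (l : List V) (u : V) (hu : u ≠ c), IsWalkTo u d l →
      IsWalkTo (⟨u, hu⟩ : {x : V // x ≠ c}) ⟨d, hcd.symm⟩ (con l) := by
    intro l
    induction l with
    | nil =>
      intro u hu h
      rw [isWalkTo_nil] at h
      exact isWalkTo_nil.mpr (Subtype.ext h)
    | cons v l ih =>
      intro u hu h
      rw [isWalkTo_cons] at h
      by_cases hv : v = c
      · rw [con_cons]; simp only [dif_pos hv]
        rcases l with _ | ⟨w, l⟩
        · exact absurd (hv.symm.trans (isWalkTo_nil.mp h)) hcd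
        · exact ih u hu (isWalkTo_cons.mpr (isWalkTo_cons.mp h))
      · rw [con_cons]; simp only [dif_neg hv]
        exact isWalkTo_cons.mpr (ih v hv h)
  refine le_antisymm ?_ ?_
  · refine le_iInf fun l => ?_
    calc endToEnd A' ⟨s, hcs.symm⟩ ⟨d, hcd.symm⟩ t
        ≤ walkArr A' ⟨s, hcs.symm⟩ (con l.1) t :=
          endToEnd_le_walk _ (con_walk l.1 s hcs.symm l.2) t
      _ ≤ walkArr A s l.1 t := (key l.1).1 s hcs.symm t
  · have main : ∀ (l' : List {x : V // x ≠ c}) (u : {x : V // x ≠ c}) (t : ℝ≥0∞),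
        IsWalkTo u ⟨d, hcd.symm⟩ l' → endToEnd A u.1 d t ≤ walkArr A' u l' t := by
      intro l'
      induction l' with
      | nil =>
        intro u t h
        rw [isWalkTo_nil] at h
        have hud : u.1 = d := by rw [h]
        exact endToEnd_le_walk [] (isWalkTo_nil.mpr hud) t
      | cons v l ih =>
        intro u t h
        rw [isWalkTo_cons] at h
        rw [walkArr_cons]
        calc endToEnd A u.1 d t ≤ endToEnd A v.1 d (A' u v t) := by
              rw [hA']
              rcases min_cases (A u.1 v.1 t) (A c v.1 (A u.1 c t)) with ⟨he, _⟩ | ⟨he, _⟩ <;>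
                rw [he]
              · exact endToEnd_step u.1 v.1 d t
              · exact le_trans (endToEnd_step u.1 c d t) (endToEnd_step c v.1 d _)
          _ ≤ walkArr A' v l (A' u v t) := ih v _ h
    exact le_iInf fun l => main l.1 ⟨s, hcs.symm⟩ t l.2
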